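/- Let a : B → [0,∞) be an assorter over a finite set of ballots B partitioned into batches B_1,...,B_d. Let a_rep(B_i) and a_true(B_i) denote the reported and true mean of a over batch B_i, and let a_rep(B), a_true(B) denote the overall reported and true means (weighted by batch sizes). Define M = a_rep(B) - 1/2, w = max_j a_rep(B_j), and the Batchcomp assorter A(B_i) = 1/2 + (M + a_true(B_i) - a_rep(B_i))/(2(w - M)). Assume w > M > 0. Then A(B_i) ≥ 0 for every batch B_i. -/
import Mathlib

/-- The Batchcomp assorter `A B_i = 1/2 + (M + a_true B_i - a_rep B_i)/(2(w - M))`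
is non-negative on every batch, where `M = a_rep(B) - 1/2`, `w = max_j a_rep B_j`,
assuming `w > M > 0`. -/
theorem batchcomp_assorter_nonneg {ι : Type*} [Fintype ι] [Nonempty ι]
    (size : ι → ℕ) (hsize : ∀ i, 0 < size i)
    (arep atrue : ι → ℝ) (htrue : ∀ i, 0 ≤ atrue i)
    (n : ℝ) (hn : n = ∑ i, (size i : ℝ))
    (w : ℝ) (hw : w = Finset.univ.sup' Finset.univ_nonempty arep)
    (M : ℝ) (hM : M = (1 / n) * (∑ i, (size i : ℝ) * arep i) - 1 / 2)
    (hwM : M < w) (hMpos : 0 < M) :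
    ∀ i, 0 ≤ 1 / 2 + (M + atrue i - arep i) / (2 * (w - M)) := by
  intro i
  have hpos : 0 < w - M := sub_pos.mpr hwM
  have h1 : arep i ≤ w := hw ▸ Finset.le_sup' arep (Finset.mem_univ i)
  have heq : 1 / 2 + (M + atrue i - arep i) / (2 * (w - M))
      = (w + atrue i - arep i) / (2 * (w - M)) := by
    field_simp
    ring
  rw [heq]
  apply div_nonneg
  · linarith [htrue i]
  · linarith
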